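/- If the Hahn series ring R((Γ)) over a linearly ordered abelian group Γ is a right SA-ring, then R is a right SA-ring. -/

import Mathlib

/-- A two-sided ideal (as a subset). -/
def IsTwoSidedIdeal {S : Type*} [Ring S] (I : Set S) : Prop :=
  0 ∈ I ∧ (∀ a ∈ I, ∀ b ∈ I, a + b ∈ I) ∧ (∀ a ∈ I, -a ∈ I) ∧
    (∀ a ∈ I, ∀ r : S, a * r ∈ I) ∧ ∀ a ∈ I, ∀ r : S, r * a ∈ I

/-- The right annihilator of a subset. -/
def rAnn {S : Type*} [Ring S] (X : Set S) : Set S := {r : S | ∀ x ∈ X, x * r = 0}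

/-- A ring `S` is a right SA-ring if for any two ideals `I`, `J` there is an
ideal `K` with `r(I) + r(J) = r(K)`. -/
def IsRightSA (S : Type*) [Ring S] : Prop :=
  ∀ I J : Set S, IsTwoSidedIdeal I → IsTwoSidedIdeal J →
    ∃ K : Set S, IsTwoSidedIdeal K ∧
      {x : S | ∃ y ∈ rAnn I, ∃ z ∈ rAnn J, x = y + z} = rAnn K

section Aux

variable {R : Type*} [Ring R] {Γ : Type*} [AddCommGroup Γ] [LinearOrder Γ] [IsOrderedAddMonoid Γ]

/-- The lift of a set of coefficients to Hahn series. -/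
def liftSet (Γ : Type*) [AddCommGroup Γ] [LinearOrder Γ] [IsOrderedAddMonoid Γ] (I : Set R) :
    Set (HahnSeries Γ R) := {f | ∀ g : Γ, f.coeff g ∈ I}

lemma sum_mem_of_ideal {I : Set R} (hI : IsTwoSidedIdeal I) {ι : Type*} (s : Finset ι)
    (f : ι → R) (hf : ∀ i ∈ s, f i ∈ I) : ∑ i ∈ s, f i ∈ I := by
  classical
  induction s using Finset.induction with
  | empty => simpa using hI.1
  | insert a s hx ih =>
    rw [Finset.sum_insert hx]
    exact hI.2.1 _ (hf _ (Finset.mem_insert_self _ _)) _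
      (ih fun i hi => hf i (Finset.mem_insert_of_mem hi))

lemma liftSet_ideal {I : Set R} (hI : IsTwoSidedIdeal I) :
    IsTwoSidedIdeal (liftSet Γ I) := by
  obtain ⟨h0, hadd, hneg, hmr, hml⟩ := hI
  refine ⟨fun g => by simpa using h0, fun a ha b hb g => ?_, fun a ha g => ?_,
    fun a ha r g => ?_, fun a ha r g => ?_⟩
  · simpa using hadd _ (ha g) _ (hb g)
  · simpa using hneg _ (ha g)
  · rw [HahnSeries.coeff_mul]
    exact sum_mem_of_ideal ⟨h0, hadd, hneg, hmr, hml⟩ _ _ fun ij _ => hmr _ (ha ij.1) _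
  · rw [HahnSeries.coeff_mul]
    exact sum_mem_of_ideal ⟨h0, hadd, hneg, hmr, hml⟩ _ _ fun ij _ => hml _ (ha ij.2) _

lemma single_mem_liftSet {I : Set R} (h0 : (0 : R) ∈ I) {a : R} (ha : a ∈ I) (g : Γ) :
    HahnSeries.single g a ∈ liftSet Γ I := by
  intro g'
  rcases eq_or_ne g' g with rfl | hne
  · simpa [HahnSeries.coeff_single_same] using ha
  · simpa [HahnSeries.coeff_single_of_ne hne] using h0

lemma rAnn_liftSet {I : Set R} (hI : IsTwoSidedIdeal I) :
    rAnn (liftSet Γ I) = liftSet Γ (rAnn I) := by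
  ext f
  constructor
  · intro hf g a ha
    have h1 : HahnSeries.single (0 : Γ) a * f = 0 :=
      hf _ (single_mem_liftSet hI.1 ha 0)
    have := congrArg (fun x => HahnSeries.coeff x g) h1
    simpa [HahnSeries.coeff_single_zero_mul] using this
  · intro hf x hx
    ext g
    rw [HahnSeries.coeff_mul, HahnSeries.coeff_zero]
    exact Finset.sum_eq_zero fun ij _ => hf ij.2 _ (hx ij.1)

end Aux

/-- If the Hahn series ring `R((Γ))` is a right SA-ring, then `R` is a right SA-ring. -/
theorem rightSA_of_hahnSeries {R : Type*} [Ring R] (Γ : Type*)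
    [AddCommGroup Γ] [LinearOrder Γ] [IsOrderedAddMonoid Γ] (h : IsRightSA (HahnSeries Γ R)) :
    IsRightSA R := by
  intro I J hI hJ
  obtain ⟨Kb, hKb, hKeq⟩ := h (liftSet Γ I) (liftSet Γ J) (liftSet_ideal hI) (liftSet_ideal hJ)
  set K : Set R := {a : R | ∃ f ∈ Kb, ∃ g : Γ, f.coeff g = a} with hKdef
  obtain ⟨hK0, hKadd, hKneg, hKmr, hKml⟩ := hKb
  have hKideal : IsTwoSidedIdeal K := by
    refine ⟨⟨0, hK0, 0, rfl⟩, ?_, ?_, ?_, ?_⟩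
    · rintro a ⟨f, hf, g, rfl⟩ b ⟨f', hf', g', rfl⟩
      refine ⟨HahnSeries.single (g' - g) 1 * f + f', hKadd _ (hKml _ hf _) _ hf', g', ?_⟩
      have h2 : (HahnSeries.single (g' - g) (1 : R) * f).coeff (g + (g' - g)) =
          1 * f.coeff g := HahnSeries.coeff_single_mul_add
      rw [show g + (g' - g) = g' by abel, one_mul] at h2
      rw [HahnSeries.coeff_add, h2]
    · rintro a ⟨f, hf, g, rfl⟩
      exact ⟨-f, hKneg _ hf, g, by simp⟩
    · rintro a ⟨f, hf, g, rfl⟩ r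
      exact ⟨f * HahnSeries.single 0 r, hKmr _ hf _, g, HahnSeries.coeff_mul_single_zero⟩
    · rintro a ⟨f, hf, g, rfl⟩ r
      exact ⟨HahnSeries.single 0 r * f, hKml _ hf _, g, HahnSeries.coeff_single_zero_mul⟩
  have key : ∀ x : R, x ∈ rAnn K ↔ HahnSeries.single (0 : Γ) x ∈ rAnn Kb := by
    intro x
    constructor
    · intro hx f hf
      ext g
      rw [HahnSeries.coeff_mul_single_zero, HahnSeries.coeff_zero]
      exact hx _ ⟨f, hf, g, rfl⟩
    · rintro hx a ⟨f, hf, g, rfl⟩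
      have := congrArg (fun y => HahnSeries.coeff y g) (hx f hf)
      simpa [HahnSeries.coeff_mul_single_zero] using this
  refine ⟨K, hKideal, ?_⟩
  ext x
  simp only [Set.mem_setOf_eq]
  constructor
  · rintro ⟨y, hy, z, hz, rfl⟩
    rw [key]
    have : HahnSeries.single (0 : Γ) (y + z) =
        HahnSeries.single (0 : Γ) y + HahnSeries.single (0 : Γ) z := by
      ext g
      by_cases hg : g = (0 : Γ) <;> simp [HahnSeries.coeff_single, hg]
    rw [this]
    have hmem : HahnSeries.single (0 : Γ) y + HahnSeries.single (0 : Γ) z ∈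
        {x : HahnSeries Γ R | ∃ u ∈ rAnn (liftSet Γ I), ∃ v ∈ rAnn (liftSet Γ J), x = u + v} := by
      refine ⟨_, ?_, _, ?_, rfl⟩
      · rw [rAnn_liftSet hI]
        exact single_mem_liftSet (I := rAnn I) (fun a _ => mul_zero a) hy 0
      · rw [rAnn_liftSet hJ]
        exact single_mem_liftSet (I := rAnn J) (fun a _ => mul_zero a) hz 0
    rw [hKeq] at hmem
    exact hmem
  · intro hx
    rw [key] at hx
    rw [← hKeq] at hx
    obtain ⟨u, hu, v, hv, huv⟩ := hx
    rw [rAnn_liftSet hI] at hu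
    rw [rAnn_liftSet hJ] at hv
    refine ⟨u.coeff 0, hu 0, v.coeff 0, hv 0, ?_⟩
    have := congrArg (fun y => HahnSeries.coeff y (0 : Γ)) huv
    simpa using this
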